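/- If I ⊆ ℝ̄[x₁,…,xₙ] is a tropical ideal and m = x₁⋯xₙ is the product of the variables, then the saturation (I : m^∞) = { f : m^k·f ∈ I for some k ≥ 0 } equals I·ℝ̄[x₁^{±1},…,xₙ^{±1}] ∩ ℝ̄[x₁,…,xₙ]. -/
import Mathlib


open scoped Classical
open Filter

noncomputable section

namespace TropStmt

/-- The tropical semiring of coefficients: `ℝ ∪ {∞}`, with `⊕ = min` and `⊙ = +`. -/
abbrev TR : Type := WithTop ℝ

/-- A tropical polynomial with monomials indexed by `M`, given by its coefficient
function.  The coefficient `⊤ = ∞` means the monomial does not occur. -/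
abbrev TPoly (M : Type) : Type := M → TR

section Generic

variable {M : Type} [AddCommMonoid M]

/-- The support of a tropical polynomial: monomials with coefficient `≠ ∞`. -/
def psupp (f : TPoly M) : Set M := {u | f u ≠ ⊤}

/-- The zero tropical polynomial (all coefficients `∞`). -/
def zeroPoly (M : Type) : TPoly M := fun _ => ⊤

/-- Tropical addition of polynomials: coefficientwise minimum. -/
def tadd (f g : TPoly M) : TPoly M := fun u => min (f u) (g u)

/-- Tropical multiplication of a polynomial `f` by the term `c ⊙ x^v`. -/
def tmulTerm (c : TR) (v : M) (f : TPoly M) : TPoly M :=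
  fun u => if h : ∃ t : M, t + v = u then c + f h.choose else ⊤

/-- An ideal in the semiring of tropical polynomials (with finite supports):
closed under tropical addition and multiplication by terms. -/
def IsTIdeal (I : Set (TPoly M)) : Prop :=
  (∀ f ∈ I, (psupp f).Finite) ∧ zeroPoly M ∈ I ∧
    (∀ f ∈ I, ∀ g ∈ I, tadd f g ∈ I) ∧
    ∀ f ∈ I, ∀ (c : TR) (v : M), tmulTerm c v f ∈ I

/-- `Elim h f g u`: `h` is an elimination of the monomial `x^u` from `f` and `g`:
`[h]_u = ∞`, `[h]_v ≥ min([f]_v, [g]_v)` for all `v`, with equality whenever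
`[f]_v ≠ [g]_v`. -/
def Elim (h f g : TPoly M) (u : M) : Prop :=
  h u = ⊤ ∧ ∀ v : M, min (f v) (g v) ≤ h v ∧ (f v ≠ g v → h v = min (f v) (g v))

/-- A tropical ideal: an ideal satisfying the monomial elimination axiom. -/
def IsTropIdeal (I : Set (TPoly M)) : Prop :=
  IsTIdeal I ∧
    ∀ f ∈ I, ∀ g ∈ I, ∀ u : M, f u = g u → f u ≠ ⊤ → ∃ h ∈ I, Elim h f g u

/-- The ideal generated by a set of tropical polynomials. -/
def idealGen (S : Set (TPoly M)) : Set (TPoly M) := ⋂₀ {I | IsTIdeal I ∧ S ⊆ I}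

/-- The monomial `x^u` (as a tropical polynomial, with coefficient `0`). -/
def monPoly (u : M) : TPoly M := fun v => if v = u then (0 : TR) else ⊤

end Generic

section Vars

variable {n m : ℕ}

/-- Embedding of polynomials into Laurent polynomials. -/
def embed (f : TPoly (Fin n → ℕ)) : TPoly (Fin n → ℤ) :=
  fun u => if h : ∃ v : Fin n → ℕ, (fun i => ((v i : ℤ))) = u then f h.choose else ⊤

/-- Multiplication of a Laurent polynomial by the Laurent monomial `x^v`. -/
def shiftZ (v : Fin n → ℤ) (f : TPoly (Fin n → ℤ)) : TPoly (Fin n → ℤ) :=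
  fun u => f (u - v)

/-- The ideal generated in the Laurent polynomial semiring by an ideal of the
polynomial semiring: its elements are the Laurent-monomial multiples `x^v ⊙ f`, `f ∈ I`. -/
def Lext (I : Set (TPoly (Fin n → ℕ))) : Set (TPoly (Fin n → ℤ)) :=
  {g | ∃ f ∈ I, ∃ v : Fin n → ℤ, g = shiftZ v (embed f)}

/-- The intersection of a Laurent ideal with the polynomial subsemiring
`ℝ̄[x₁,…,xₙ]`, viewed as a set of (ℕ-exponent) polynomials. -/
def restrictPoly (I : Set (TPoly (Fin n → ℤ))) : Set (TPoly (Fin n → ℕ)) :=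
  {f | embed f ∈ I}

def dotZ (w : Fin n → ℝ) (u : Fin n → ℤ) : ℝ := ∑ i, w i * (u i : ℝ)

def dotN (w : Fin n → ℝ) (u : Fin n → ℕ) : ℝ := ∑ i, w i * (u i : ℝ)

/-- `attainsZ w f u`: the monomial `u` occurs in `f` and attains the minimum in the
tropical evaluation of `f` at `w`. -/
def attainsZ (w : Fin n → ℝ) (f : TPoly (Fin n → ℤ)) (u : Fin n → ℤ) : Prop :=
  f u ≠ ⊤ ∧ ∀ v : Fin n → ℤ, f u + ((dotZ w u : ℝ) : TR) ≤ f v + ((dotZ w v : ℝ) : TR)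

def attainsN (w : Fin n → ℝ) (f : TPoly (Fin n → ℕ)) (u : Fin n → ℕ) : Prop :=
  f u ≠ ⊤ ∧ ∀ v : Fin n → ℕ, f u + ((dotN w u : ℝ) : TR) ≤ f v + ((dotN w v : ℝ) : TR)

/-- The support of the initial form `in_w(f)` of a Laurent polynomial, a Boolean
polynomial represented by its set of monomials. -/
def inSuppZ (w : Fin n → ℝ) (f : TPoly (Fin n → ℤ)) : Set (Fin n → ℤ) := {u | attainsZ w f u}

def inSuppN (w : Fin n → ℝ) (f : TPoly (Fin n → ℕ)) : Set (Fin n → ℕ) := {u | attainsN w f u}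

/-- The initial ideal `in_w(I)` of a Laurent tropical ideal, represented as the set of
supports of the (Boolean) initial forms of elements of `I`. -/
def inIdealZ (I : Set (TPoly (Fin n → ℤ))) (w : Fin n → ℝ) : Set (Set (Fin n → ℤ)) :=
  {S | ∃ f ∈ I, S = inSuppZ w f}

def inIdealN (I : Set (TPoly (Fin n → ℕ))) (w : Fin n → ℝ) : Set (Set (Fin n → ℕ)) :=
  {S | ∃ f ∈ I, S = inSuppN w f}

/-- The tropical variety of a Laurent tropical ideal: points where every nonzero
element attains its minimum at least twice. -/
def trvarietyZ (I : Set (TPoly (Fin n → ℤ))) : Set (Fin n → ℝ) :=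
  {w | ∀ f ∈ I, (∀ u, f u = ⊤) ∨ ∃ u v, u ≠ v ∧ attainsZ w f u ∧ attainsZ w f v}

/-- `attainsB w S u`: in the Boolean polynomial with support `S`, the monomial `u`
attains the minimum at `w`. -/
def attainsB (w : Fin n → ℝ) (S : Set (Fin n → ℤ)) (u : Fin n → ℤ) : Prop :=
  u ∈ S ∧ ∀ v ∈ S, dotZ w u ≤ dotZ w v

/-- Support of the initial form of a Boolean polynomial (given by its support `S`). -/
def inSuppB (w : Fin n → ℝ) (S : Set (Fin n → ℤ)) : Set (Fin n → ℤ) := {u | attainsB w S u}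

/-- Variety of a Boolean (support-set) ideal. -/
def BvarietyZ (J : Set (Set (Fin n → ℤ))) : Set (Fin n → ℝ) :=
  {w | ∀ S ∈ J, S = ∅ ∨ ∃ u v, u ≠ v ∧ attainsB w S u ∧ attainsB w S v}

/-- A monomial term order on `ℝ̄[x₁,…,xₙ]` (as a strict order relation `r`, where
`r u v` means `x^u ≺ x^v`).  Note `x^0 = 1` is the largest monomial. -/
structure IsTermOrder (n : ℕ) (r : (Fin n → ℕ) → (Fin n → ℕ) → Prop) : Prop where
  irrefl : ∀ u, ¬ r u u
  trans : ∀ u v w, r u v → r v w → r u w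
  total : ∀ u v, u ≠ v → r u v ∨ r v u
  add_invariant : ∀ u v t, r u v → r (u + t) (v + t)
  lt_one : ∀ u, u ≠ 0 → r u 0

/-- `u` is the `r`-initial monomial of `f`: the `r`-smallest monomial in the support. -/
def isInitialMon (r : (Fin n → ℕ) → (Fin n → ℕ) → Prop) (f : TPoly (Fin n → ℕ))
    (u : Fin n → ℕ) : Prop :=
  f u ≠ ⊤ ∧ ∀ v, f v ≠ ⊤ → v ≠ u → r u v

/-- The set of monomials of the monomial initial ideal `in_≺(I)`: all monomial
multiples of initial monomials of elements of `I`. -/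
def monInitialSet (r : (Fin n → ℕ) → (Fin n → ℕ) → Prop) (I : Set (TPoly (Fin n → ℕ))) :
    Set (Fin n → ℕ) :=
  {u | ∃ g ∈ I, ∃ v, isInitialMon r g v ∧ ∃ t, u = v + t}

/-- Total degree of a monomial. -/
def totdeg (u : Fin m → ℕ) : ℕ := ∑ i, u i

/-- `E` is an independent set for (the matroids of) `I`: it does not contain the
support of any nonzero polynomial of `I`. -/
def indepFinset (I : Set (TPoly (Fin m → ℕ))) (E : Finset (Fin m → ℕ)) : Prop :=
  ∀ f ∈ I, (∃ u, f u ≠ ⊤) → ¬ (psupp f ⊆ ↑E)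

/-- `hilbAt I d N`: the Hilbert function of the homogeneous tropical ideal `I` takes
the value `N` at degree `d`, i.e. `N` is the maximum size of a set of degree-`d`
monomials not containing the support of any polynomial of `I`. -/
def hilbAt (I : Set (TPoly (Fin m → ℕ))) (d N : ℕ) : Prop :=
  (∃ E : Finset (Fin m → ℕ), (∀ u ∈ E, totdeg u = d) ∧ indepFinset I E ∧ E.card = N) ∧
    ∀ E : Finset (Fin m → ℕ), (∀ u ∈ E, totdeg u = d) → indepFinset I E → E.card ≤ N

/-- The degree-`d` homogeneous part of a tropical polynomial. -/
def homPart (f : TPoly (Fin m → ℕ)) (d : ℕ) : TPoly (Fin m → ℕ) :=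
  fun u => if totdeg u = d then f u else ⊤

/-- A homogeneous tropical ideal. -/
def IsHomogTropIdeal (I : Set (TPoly (Fin m → ℕ))) : Prop :=
  IsTropIdeal I ∧ ∀ f ∈ I, ∀ d : ℕ, homPart f d ∈ I

/-- The (total) degree of a tropical polynomial. -/
def polyDeg (f : TPoly (Fin m → ℕ)) : ℕ := sSup (totdeg '' psupp f)

/-- The homogenization of a tropical polynomial, using a new variable `x₀`. -/
def homogenize (f : TPoly (Fin m → ℕ)) : TPoly (Fin (m + 1) → ℕ) :=
  fun v => if v 0 + totdeg (fun i : Fin m => v i.succ) = polyDeg f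
    then f (fun i : Fin m => v i.succ) else ⊤

/-- The homogenization of a tropical ideal. -/
def homogIdeal (I : Set (TPoly (Fin m → ℕ))) : Set (TPoly (Fin (m + 1) → ℕ)) :=
  idealGen (homogenize '' I)

/-- `dimAgrees I p`: `p` is the Hilbert polynomial of the homogenization of `I`,
i.e. the Hilbert function of `I^h` eventually agrees with `p`.  The dimension of the
tropical ideal `I` is the degree of such a `p`. -/
def dimAgrees (I : Set (TPoly (Fin m → ℕ))) (p : Polynomial ℝ) : Prop :=
  ∀ᶠ d in atTop, ∃ N : ℕ, hilbAt (homogIdeal I) d N ∧ (N : ℝ) = p.eval (d : ℝ)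

/-- Specialization of the last variable `x_{n+1} = a` of a tropical polynomial. -/
def specLast (a : ℝ) (f : TPoly (Fin (n + 1) → ℕ)) : TPoly (Fin n → ℕ) :=
  fun u => sInf {t : TR | ∃ k : ℕ, t = f (Fin.snoc u k) + k • ((a : ℝ) : TR)}

/-- Specialization of the `y`-variables at a point `a ∈ ℝ̄^m`. -/
def specializeY (a : Fin m → TR) (f : TPoly ((Fin n → ℕ) × (Fin m → ℕ))) :
    TPoly (Fin n → ℕ) :=
  fun u => sInf {t : TR | ∃ v : Fin m → ℕ, t = f (u, v) + ∑ i, v i • a i}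

/-- Dehomogenization: substitute `x₀ = 0` (the tropical multiplicative unit). -/
def dehom (f : TPoly (Fin (n + 1) → ℕ)) : TPoly (Fin n → ℕ) :=
  fun u => sInf {t : TR | ∃ k : ℕ, t = f (Fin.cons k u)}

/-- The trivialization of a tropical polynomial: all finite coefficients become `0`. -/
def phiBool (f : TPoly (Fin (n + 1) → ℕ)) : TPoly (Fin (n + 1) → ℕ) :=
  fun u => if f u = ⊤ then (⊤ : TR) else 0

/-- Independence of a finite set of Laurent monomials relative to a Laurent ideal. -/
def LindepFinset (I : Set (TPoly (Fin n → ℤ))) (E : Finset (Fin n → ℤ)) : Prop :=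
  ∀ f ∈ I, (∃ u, f u ≠ ⊤) → ¬ (psupp f ⊆ ↑E)

/-- `LdegIs I d`: the zero-dimensional Laurent tropical ideal `I` has degree `d`:
`d` is the maximal size of a finite set of monomials not containing the support
of any nonzero element of `I`. -/
def LdegIs (I : Set (TPoly (Fin n → ℤ))) (d : ℕ) : Prop :=
  (∃ E : Finset (Fin n → ℤ), LindepFinset I E ∧ E.card = d) ∧
    ∀ E : Finset (Fin n → ℤ), LindepFinset I E → E.card ≤ d

/-- A Laurent tropical ideal is zero-dimensional if the sizes of independent sets of
monomials are bounded. -/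
def IsZeroDimL (I : Set (TPoly (Fin n → ℤ))) : Prop :=
  ∃ N : ℕ, ∀ E : Finset (Fin n → ℤ), LindepFinset I E → E.card ≤ N

def BindepFinset (J : Set (Set (Fin n → ℤ))) (E : Finset (Fin n → ℤ)) : Prop :=
  ∀ S ∈ J, S.Nonempty → ¬ (S ⊆ ↑E)

/-- Degree of a zero-dimensional Boolean (support-set) ideal. -/
def BdegIs (J : Set (Set (Fin n → ℤ))) (d : ℕ) : Prop :=
  (∃ E : Finset (Fin n → ℤ), BindepFinset J E ∧ E.card = d) ∧
    ∀ E : Finset (Fin n → ℤ), BindepFinset J E → E.card ≤ d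

/-- A Laurent monomial `u` has degree zero for the grading induced by the subspace `L`. -/
def degZero (L : Submodule ℝ (Fin n → ℝ)) (u : Fin n → ℤ) : Prop :=
  ∀ v ∈ L, (∑ i, v i * (u i : ℝ)) = 0

/-- Degree of the degree-zero part (for the grading induced by `L`) of a Boolean
support-set ideal `J`: the maximal size of a finite set of degree-zero monomials not
containing the support of any nonempty element of the degree-zero part of `J`. -/
def Bdeg0Is (J : Set (Set (Fin n → ℤ))) (L : Submodule ℝ (Fin n → ℝ)) (d : ℕ) : Prop :=
  (∃ E : Finset (Fin n → ℤ), (∀ u ∈ E, degZero L u) ∧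
      (∀ S ∈ J, (∀ u ∈ S, degZero L u) → S.Nonempty → ¬ (S ⊆ ↑E)) ∧ E.card = d) ∧
    ∀ E : Finset (Fin n → ℤ), (∀ u ∈ E, degZero L u) →
      (∀ S ∈ J, (∀ u ∈ S, degZero L u) → S.Nonempty → ¬ (S ⊆ ↑E)) → E.card ≤ d

/-- An `ℝ`-rational polyhedron: defined by finitely many inequalities with integral
normal vectors and real constants. -/
def IsRatPolyhedron (P : Set (Fin n → ℝ)) : Prop :=
  ∃ (k : ℕ) (a : Fin k → Fin n → ℤ) (b : Fin k → ℝ),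
    P = {x | ∀ i, (∑ j, (a i j : ℝ) * x j) ≤ b i}

/-- `F` is a face of the polyhedron `P`. -/
def IsFaceOf (F P : Set (Fin n → ℝ)) : Prop :=
  F = P ∨ ∃ (a : Fin n → ℝ) (b : ℝ), (∀ x ∈ P, (∑ i, a i * x i) ≤ b) ∧
    F = {x | x ∈ P ∧ (∑ i, a i * x i) = b}

/-- The linear span of the directions of a subset of `ℝⁿ`. -/
def spanDirs (σ : Set (Fin n → ℝ)) : Submodule ℝ (Fin n → ℝ) :=
  Submodule.span ℝ {y | ∃ p ∈ σ, ∃ q ∈ σ, y = p - q}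

/-- The dimension of a polyhedron. -/
def pdim (σ : Set (Fin n → ℝ)) : ℕ := Module.finrank ℝ (spanDirs σ)

/-- `u ∈ ℤⁿ` is primitive modulo the subspace `L`: it is a first lattice point, i.e.
nonzero and not a `k`-th multiple (`k ≥ 2`) of a lattice vector modulo `L`. -/
def PrimitiveMod (L : Submodule ℝ (Fin n → ℝ)) (u : Fin n → ℤ) : Prop :=
  (fun i => (u i : ℝ)) ∉ L ∧
    ∀ k : ℕ, 2 ≤ k → ∀ v : Fin n → ℤ, (fun i => (u i : ℝ) - (k : ℝ) * (v i : ℝ)) ∉ L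

/-- `hasDisk S d`: `S` contains a `d`-dimensional disk around some point. -/
def hasDisk (S : Set (Fin n → ℝ)) (d : ℕ) : Prop :=
  ∃ (x : Fin n → ℝ) (W : Submodule ℝ (Fin n → ℝ)), Module.finrank ℝ W = d ∧
    ∃ ε > (0 : ℝ), ∀ y ∈ W, ‖y‖ < ε → x + y ∈ S

/-- The monomial map `φ* : x^u ↦ y^{Au}` on Laurent tropical polynomials. -/
def phiMap (A : Matrix (Fin n) (Fin n) ℤ) (f : TPoly (Fin n → ℤ)) : TPoly (Fin n → ℤ) :=
  fun v => if h : ∃ u : Fin n → ℤ, A.mulVec u = v then f h.choose else ⊤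

end Vars

section Product

variable {n m : ℕ}

def attainsP (x : (Fin n → ℝ) × (Fin m → ℝ)) (f : TPoly ((Fin n → ℤ) × (Fin m → ℤ)))
    (p : (Fin n → ℤ) × (Fin m → ℤ)) : Prop :=
  f p ≠ ⊤ ∧ ∀ q : (Fin n → ℤ) × (Fin m → ℤ),
    f p + ((dotZ x.1 p.1 + dotZ x.2 p.2 : ℝ) : TR) ≤ f q + ((dotZ x.1 q.1 + dotZ x.2 q.2 : ℝ) : TR)

def trvarietyP (I : Set (TPoly ((Fin n → ℤ) × (Fin m → ℤ)))) :
    Set ((Fin n → ℝ) × (Fin m → ℝ)) :=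
  {x | ∀ f ∈ I, (∀ p, f p = ⊤) ∨ ∃ p q, p ≠ q ∧ attainsP x f p ∧ attainsP x f q}

end Product

section Univariate

def attains1 (x : ℝ) (f : TPoly ℤ) (u : ℤ) : Prop :=
  f u ≠ ⊤ ∧ ∀ v : ℤ, f u + (((u : ℝ) * x : ℝ) : TR) ≤ f v + (((v : ℝ) * x : ℝ) : TR)

def inSupp1 (x : ℝ) (f : TPoly ℤ) : Set ℤ := {u | attains1 x f u}

def trvariety1 (I : Set (TPoly ℤ)) : Set ℝ :=
  {x | ∀ f ∈ I, (∀ u, f u = ⊤) ∨ ∃ u v, u ≠ v ∧ attains1 x f u ∧ attains1 x f v}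

/-- The variety of a single univariate Laurent tropical polynomial. -/
def Vf (h : TPoly ℤ) : Set ℝ :=
  {x | (∀ u, h u = ⊤) ∨ ∃ u v, u ≠ v ∧ attains1 x h u ∧ attains1 x h v}

/-- Evaluation of a univariate Laurent tropical polynomial at `x ∈ ℝ`. -/
def eval1 (f : TPoly ℤ) (x : ℝ) : TR := sInf {t : TR | ∃ u : ℤ, t = f u + (((u : ℝ) * x : ℝ) : TR)}

/-- `g` is the convexification of `f`: it defines the same function and has the
(pointwise) minimal coefficients among all such polynomials. -/
def IsLConv (f g : TPoly ℤ) : Prop :=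
  (∀ x : ℝ, eval1 g x = eval1 f x) ∧
    ∀ h : TPoly ℤ, (∀ x : ℝ, eval1 h x = eval1 f x) → ∀ u, g u ≤ h u

/-- Tropical multiplication of univariate Laurent polynomials. -/
def pmulZ (f g : TPoly ℤ) : TPoly ℤ :=
  fun u => sInf {t : TR | ∃ i j : ℤ, i + j = u ∧ t = f i + g j}

def unit1 : TPoly ℤ := monPoly (0 : ℤ)

def powZ (f : TPoly ℤ) : ℕ → TPoly ℤ
  | 0 => unit1
  | (k + 1) => pmulZ f (powZ f k)

/-- The linear tropical polynomial `x ⊕ w`. -/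
def lin1 (w : ℝ) : TPoly ℤ :=
  fun u => if u = 0 then ((w : ℝ) : TR) else if u = 1 then (0 : TR) else ⊤

/-- Tropical divisibility of univariate Laurent polynomials. -/
def LDvd (f g : TPoly ℤ) : Prop := ∃ q : TPoly ℤ, (psupp q).Finite ∧ g = pmulZ f q

/-- `in_w(f)` is a Boolean polynomial lying in `𝔹[x]` of degree `m`. -/
def goodAt (x : ℝ) (f : TPoly ℤ) (m : ℕ) : Prop :=
  (m : ℤ) ∈ inSupp1 x f ∧ ∀ u ∈ inSupp1 x f, 0 ≤ u ∧ u ≤ (m : ℤ)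

/-- The multiplicity of `V(I)` at `x`: the smallest degree of a Boolean polynomial in
`in_x(I) ∩ 𝔹[x]`. -/
def idealMult1 (I : Set (TPoly ℤ)) (x : ℝ) (m : ℕ) : Prop :=
  (∃ f ∈ I, goodAt x f m) ∧ ∀ f ∈ I, ∀ m' : ℕ, goodAt x f m' → m ≤ m'

/-- The multiplicity of a univariate tropical polynomial `h` at `w`: the exponent of
the factor `(x ⊕ w)` in the factorization of the convexification of `h`. -/
def polyMult1 (h : TPoly ℤ) (w : ℝ) (m : ℕ) : Prop :=
  ∃ ch : TPoly ℤ, IsLConv h ch ∧ LDvd (powZ (lin1 w) m) ch ∧ ¬ LDvd (powZ (lin1 w) (m + 1)) ch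

end Univariate

end TropStmt

namespace TropAux

open TropStmt

variable {n : ℕ}

def coeN (u : Fin n → ℕ) : Fin n → ℤ := fun i => (u i : ℤ)

lemma coeN_inj : Function.Injective (coeN (n := n)) := by
  intro a b h
  funext i
  have h1 := congrFun h i
  simp only [coeN] at h1
  exact_mod_cast h1

lemma embed_coe (f : TPoly (Fin n → ℕ)) (u : Fin n → ℕ) :
    embed f (coeN u) = f u := by
  have h : ∃ v : Fin n → ℕ, (fun i => ((v i : ℤ))) = coeN u := ⟨u, rfl⟩
  rw [embed, dif_pos h]
  congr 1
  exact coeN_inj h.choose_spec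

lemma embed_not (f : TPoly (Fin n → ℕ)) (u : Fin n → ℤ)
    (h : ¬ ∃ v : Fin n → ℕ, coeN v = u) : embed f u = ⊤ := by
  rw [embed, dif_neg]
  exact h

lemma tmulTerm_pos (c : TR) (v : Fin n → ℕ) (f : TPoly (Fin n → ℕ)) {t u : Fin n → ℕ}
    (h : t + v = u) : tmulTerm c v f u = c + f t := by
  have hex : ∃ s : Fin n → ℕ, s + v = u := ⟨t, h⟩
  rw [tmulTerm, dif_pos hex]
  have h1 : hex.choose = t := add_right_cancel (hex.choose_spec.trans h.symm)
  rw [h1]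

lemma tmulTerm_neg (c : TR) (v : Fin n → ℕ) (f : TPoly (Fin n → ℕ)) {u : Fin n → ℕ}
    (h : ¬ ∃ t : Fin n → ℕ, t + v = u) : tmulTerm c v f u = ⊤ := by
  rw [tmulTerm, dif_neg h]

end TropAux

theorem saturation_eq_laurent_extension_inter
    (n : ℕ) (I : Set (TropStmt.TPoly (Fin n → ℕ))) (hI : TropStmt.IsTropIdeal I) :
    {f : TropStmt.TPoly (Fin n → ℕ) | ∃ k : ℕ, TropStmt.tmulTerm 0 (fun _ => k) f ∈ I} =
      TropStmt.restrictPoly (TropStmt.Lext I) := by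
  open TropStmt TropAux in
  ext f
  simp only [Set.mem_setOf_eq, restrictPoly, Lext]
  constructor
  · rintro ⟨k, hg⟩
    set kN : Fin n → ℕ := fun _ => k with hkN
    set kZ : Fin n → ℤ := fun _ => (k : ℤ) with hkZ
    refine ⟨_, hg, -kZ, ?_⟩
    funext u
    show embed f u = embed (tmulTerm 0 kN f) (u - -kZ)
    have husub : u - -kZ = u + kZ := by funext i; simp [sub_neg_eq_add]
    rw [husub]
    by_cases h : ∃ u₀ : Fin n → ℕ, coeN u₀ = u
    · obtain ⟨u₀, rfl⟩ := h
      have h1 : coeN u₀ + kZ = coeN (u₀ + kN) := by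
        funext i; simp [coeN, hkZ, hkN]
      rw [embed_coe, h1, embed_coe, tmulTerm_pos 0 kN f (rfl : u₀ + kN = u₀ + kN),
        zero_add]
    · rw [embed_not f u h]
      by_cases h2 : ∃ w : Fin n → ℕ, coeN w = u + kZ
      · obtain ⟨w, hw⟩ := h2
        rw [← hw, embed_coe]
        have h3 : ¬ ∃ t : Fin n → ℕ, t + kN = w := by
          rintro ⟨t, rfl⟩
          exact h ⟨t, by funext i; have := congrFun hw i; simpa [coeN, hkZ, hkN] using this⟩
        rw [tmulTerm_neg 0 kN _ h3]
      · rw [embed_not _ _ h2]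
  · rintro ⟨g, hgI, v, hfg⟩
    set k : ℕ := Finset.univ.sup (fun i => (-v i).toNat) with hk
    have hknn : ∀ i, (0 : ℤ) ≤ (k : ℤ) + v i := by
      intro i
      have h1 : (-v i).toNat ≤ k := by
        rw [hk]; exact Finset.le_sup (f := fun i => (-v i).toNat) (Finset.mem_univ i)
      have h2 : -v i ≤ ((-v i).toNat : ℤ) := Int.self_le_toNat _
      have h3 : ((-v i).toNat : ℤ) ≤ (k : ℤ) := by exact_mod_cast h1
      linarith
    set kN : Fin n → ℕ := fun _ => k with hkN
    set kZ : Fin n → ℤ := fun _ => (k : ℤ) with hkZ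
    set w : Fin n → ℕ := fun i => ((k : ℤ) + v i).toNat with hwdef
    have hw : coeN w = kZ + v := by
      funext i
      simp only [coeN, hwdef, hkZ, Pi.add_apply]
      exact Int.toNat_of_nonneg (hknn i)
    refine ⟨k, ?_⟩
    have key : tmulTerm 0 kN f = tmulTerm 0 w g := by
      funext u
      by_cases hu : ∃ t : Fin n → ℕ, t + kN = u
      · obtain ⟨t, rfl⟩ := hu
        rw [tmulTerm_pos 0 kN f (rfl : t + kN = t + kN), zero_add]
        have h1 : f t = embed g (coeN t - v) := by
          rw [← embed_coe f t, hfg]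
          rfl
        by_cases hs : ∃ s : Fin n → ℕ, coeN s = coeN t - v
        · obtain ⟨s, hsw⟩ := hs
          have h2 : s + w = t + kN := by
            apply coeN_inj
            funext i
            have e1 := congrFun hsw i
            have e2 := congrFun hw i
            simp only [coeN, Pi.add_apply, Pi.sub_apply, hkZ, hkN] at e1 e2 ⊢
            push_cast
            linarith
          rw [tmulTerm_pos 0 w g h2, zero_add, h1, ← hsw, embed_coe]
        · rw [h1, embed_not g _ hs]
          have h3 : ¬ ∃ s : Fin n → ℕ, s + w = t + kN := by
            rintro ⟨s, hsu⟩
            refine hs ⟨s, ?_⟩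
            funext i
            have e2 := congrFun hw i
            have e3 : s i + w i = t i + k := congrFun hsu i
            simp only [coeN, Pi.sub_apply, Pi.add_apply, hkZ] at e2 ⊢
            have : (s i : ℤ) + (w i : ℤ) = (t i : ℤ) + k := by exact_mod_cast e3
            linarith
          rw [tmulTerm_neg 0 w g h3]
      · rw [tmulTerm_neg 0 kN f hu]
        by_cases hs : ∃ s : Fin n → ℕ, s + w = u
        · obtain ⟨s, rfl⟩ := hs
          rw [tmulTerm_pos 0 w g (rfl : s + w = s + w), zero_add]
          have h1 : coeN s = (coeN (s + w) - kZ) - v := by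
            funext i
            have e2 := congrFun hw i
            simp only [coeN, Pi.add_apply, Pi.sub_apply, hkZ] at e2 ⊢
            push_cast
            linarith
          have h2 : embed f (coeN (s + w) - kZ) = ⊤ := by
            apply embed_not
            rintro ⟨q, hq⟩
            refine hu ⟨q, ?_⟩
            funext i
            have e1 := congrFun hq i
            simp only [coeN, Pi.sub_apply, Pi.add_apply, hkZ, hkN] at e1 ⊢
            omega
          have h3 : g s = embed g (coeN s) := (embed_coe g s).symm
          rw [h3, h1]
          have h4 : embed g (coeN (s + w) - kZ - v) =
              shiftZ v (embed g) (coeN (s + w) - kZ) := rfl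
          rw [h4, ← hfg, h2]
        · rw [tmulTerm_neg 0 w g hs]
    rw [key]
    exact hI.1.2.2.2 g hgI 0 w
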